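/- Let X be a metric space with Hausdorff space H of nonempty compact subsets, and let q : X → Y be an open, proper, surjective continuous map onto a topological space Y. Then the function e : Y → H defined by e(y) = q⁻¹(y) is well-defined (each fiber is nonempty compact) and continuous. -/
import Mathlib


open TopologicalSpace

theorem stmt15 (X : Type*) [MetricSpace X] (Y : Type*) [TopologicalSpace Y]
    (q : X → Y) (hcont : Continuous q) (hopen : IsOpenMap q)
    (hproper : IsProperMap q) (hsurj : Function.Surjective q) :
    (∀ y : Y, IsCompact (q ⁻¹' {y}) ∧ (q ⁻¹' {y}).Nonempty) ∧
    ∃ e : Y → NonemptyCompacts X,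
      (∀ y : Y, (e y : Set X) = q ⁻¹' {y}) ∧ Continuous e := by
  have hcpt : ∀ y : Y, IsCompact (q ⁻¹' {y}) := fun y =>
    hproper.isCompact_preimage isCompact_singleton
  have hne : ∀ y : Y, (q ⁻¹' {y}).Nonempty := fun y => by
    obtain ⟨x, hx⟩ := hsurj y
    exact ⟨x, hx⟩
  refine ⟨fun y => ⟨hcpt y, hne y⟩, ?_⟩
  set e : Y → NonemptyCompacts X := fun y => ⟨⟨q ⁻¹' {y}, hcpt y⟩, hne y⟩ with he
  refine ⟨e, fun y => rfl, ?_⟩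
  rw [continuous_iff_continuousAt]
  intro y₀
  rw [ContinuousAt, Metric.tendsto_nhds]
  intro ε hε
  set δ : ℝ := ε / 3 with hδdef
  have hδ : 0 < δ := by positivity
  set F₀ : Set X := q ⁻¹' {y₀} with hF₀
  -- finite cover of the fiber by δ-balls
  obtain ⟨s, hsF, hcov⟩ := (hcpt y₀).elim_nhds_subcover (fun x => Metric.ball x δ)
    (fun x _ => Metric.ball_mem_nhds x hδ)
  -- the two neighborhoods
  set V₁ : Set Y := (q '' (Metric.thickening δ F₀)ᶜ)ᶜ with hV₁
  set V₂ : Set Y := ⋂ x ∈ s, q '' Metric.ball x δ with hV₂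
  have hV₁open : IsOpen V₁ := by
    have : IsClosed (q '' (Metric.thickening δ F₀)ᶜ) :=
      hproper.isClosedMap _ (Metric.isOpen_thickening.isClosed_compl)
    exact this.isOpen_compl
  have hV₂open : IsOpen V₂ := by
    refine isOpen_biInter_finset fun x _ => hopen _ Metric.isOpen_ball
  have hy₀V₁ : y₀ ∈ V₁ := by
    intro h
    obtain ⟨x, hx, hqx⟩ := h
    exact hx (Metric.self_subset_thickening hδ F₀ (by simpa [F₀] using hqx))
  have hy₀V₂ : y₀ ∈ V₂ := by
    refine Set.mem_iInter₂.2 fun x hx => ⟨x, Metric.mem_ball_self hδ, hsF x hx⟩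
  refine Filter.eventually_of_mem ((hV₁open.inter hV₂open).mem_nhds ⟨hy₀V₁, hy₀V₂⟩) ?_
  rintro y ⟨hyV₁, hyV₂⟩
  have hdist : dist (e y) (e y₀) ≤ 2 * δ := by
    rw [Metric.NonemptyCompacts.dist_eq]
    refine Metric.hausdorffDist_le_of_mem_dist (by positivity) ?_ ?_
    · -- fiber of y is in thickening of F₀
      intro x hx
      have hxth : x ∈ Metric.thickening δ F₀ := by
        by_contra hxc
        exact hyV₁ ⟨x, hxc, hx⟩
      obtain ⟨z, hz, hdz⟩ := Metric.mem_thickening_iff.1 hxth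
      exact ⟨z, hz, by linarith⟩
    · -- F₀ is in thickening of fiber of y
      intro z hz
      obtain ⟨x₀, hx₀s, hzball⟩ := Set.mem_iUnion₂.1 (hcov hz)
      have : y ∈ q '' Metric.ball x₀ δ := Set.mem_iInter₂.1 hyV₂ x₀ hx₀s
      obtain ⟨x', hx'ball, hqx'⟩ := this
      refine ⟨x', hqx', ?_⟩
      have h1 : dist z x₀ < δ := Metric.mem_ball.1 hzball
      have h2 : dist x' x₀ < δ := Metric.mem_ball.1 hx'ball
      calc dist z x' ≤ dist z x₀ + dist x₀ x' := dist_triangle _ _ _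
        _ = dist z x₀ + dist x' x₀ := by rw [dist_comm x₀ x']
        _ ≤ 2 * δ := by linarith
  calc dist (e y) (e y₀) ≤ 2 * δ := hdist
    _ < ε := by rw [hδdef]; linarith
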